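/- Let ξ ∈ D[√2]. Then there exists t ∈ D[ω] with t†t associate (over units of Z[√2]) to ξ if and only if there exists s ∈ D[ω] with s†s associate to √2·ξ. -/

import Mathlib

noncomputable def ω : ℂ := (1 + Complex.I) / (Real.sqrt 2 : ℂ)

noncomputable def zω (a b c d : ℤ) : ℂ := a * ω ^ 3 + b * ω ^ 2 + c * ω + d

/-- Membership in D[ω] = ℤ[1/√2, i]. -/
def inDω (t : ℂ) : Prop := ∃ k : ℕ, ∃ a b c d : ℤ, (Real.sqrt 2 : ℂ) ^ k * t = zω a b c d

/-- u is a unit of ℤ[√2] (viewed inside ℝ). -/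
def unitZsqrt2 (u : ℝ) : Prop :=
  ∃ p q p' q' : ℤ, u = (p : ℝ) + q * Real.sqrt 2 ∧
    ((p : ℝ) + q * Real.sqrt 2) * ((p' : ℝ) + q' * Real.sqrt 2) = 1

lemma hs2R : (Real.sqrt 2 : ℝ) ^ 2 = 2 := Real.sq_sqrt (by norm_num)

lemma hS2 : (Real.sqrt 2 : ℂ) ^ 2 = 2 := by
  rw [← Complex.ofReal_pow, hs2R]; norm_num

lemma hSne : (Real.sqrt 2 : ℂ) ≠ 0 := by
  simpa using (Real.sqrt_pos.mpr (by norm_num : (0:ℝ) < 2)).ne'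

lemma hω2 : ω ^ 2 = Complex.I := by
  rw [ω, div_pow, hS2, show (1 + Complex.I) ^ 2 = 2 * Complex.I by
    linear_combination Complex.I_sq]
  ring

lemma hω4 : ω ^ 4 = -1 := by
  rw [show ω ^ 4 = (ω ^ 2) ^ 2 by ring, hω2]; exact Complex.I_sq

lemma hcj : (starRingEnd ℂ) ω = (1 - Complex.I) / (Real.sqrt 2 : ℂ) := by
  rw [ω, map_div₀, map_add, map_one, Complex.conj_I, Complex.conj_ofReal]
  ring

lemma hdelta : (starRingEnd ℂ) (1 + ω) * (1 + ω) = 2 + (Real.sqrt 2 : ℂ) := by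
  rw [map_add, map_one, hcj, ω]
  field_simp
  linear_combination (-1 - (Real.sqrt 2 : ℂ)) * hS2 - Complex.I_sq

lemma htau : (starRingEnd ℂ) ((ω - ω ^ 2) / (Real.sqrt 2 : ℂ)) *
    ((ω - ω ^ 2) / (Real.sqrt 2 : ℂ)) =
    ((Real.sqrt 2 : ℂ) - 1) / (Real.sqrt 2 : ℂ) := by
  rw [hω2, map_div₀, map_sub, Complex.conj_I, Complex.conj_ofReal, hcj, ω]
  field_simp
  linear_combination (-(Real.sqrt 2 : ℂ) ^ 2 + (Real.sqrt 2 : ℂ) - 1) * hS2 +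
    (-1 + 2 * (Real.sqrt 2 : ℂ) - (Real.sqrt 2 : ℂ) ^ 2) * Complex.I_sq

lemma mulδ (a b c d : ℤ) :
    (1 + ω) * zω a b c d = zω (a + b) (b + c) (c + d) (d - a) := by
  unfold zω; push_cast; linear_combination (a : ℂ) * hω4

lemma mulτ (a b c d : ℤ) :
    (ω - ω ^ 2) * zω a b c d = zω (b - c) (c - d) (a + d) (b - a) := by
  unfold zω; push_cast; linear_combination ((a : ℂ) - a * ω - b) * hω4

lemma unit_lam_mul {u : ℝ} (h : unitZsqrt2 u) :
    unitZsqrt2 ((1 + Real.sqrt 2) * u) := by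
  obtain ⟨p, q, p', q', hu, hinv⟩ := h
  refine ⟨p + 2 * q, p + q, 2 * q' - p', p' - q', ?_, ?_⟩
  · push_cast
    linear_combination (1 + Real.sqrt 2) * hu + (q : ℝ) * hs2R
  · push_cast
    linear_combination (Real.sqrt 2 ^ 2 - 1) * hinv +
      ((-(p : ℝ) * q' + q * p' - p * q' * Real.sqrt 2 - q * p' * Real.sqrt 2
        - q * q' * Real.sqrt 2 ^ 2 + 1 - 2 * q * q') : ℝ) * hs2R

lemma unit_laminv_mul {u : ℝ} (h : unitZsqrt2 u) :
    unitZsqrt2 ((Real.sqrt 2 - 1) * u) := by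
  obtain ⟨p, q, p', q', hu, hinv⟩ := h
  refine ⟨2 * q - p, p - q, p' + 2 * q', p' + q', ?_, ?_⟩
  · push_cast
    linear_combination (Real.sqrt 2 - 1) * hu + (q : ℝ) * hs2R
  · push_cast
    linear_combination (Real.sqrt 2 ^ 2 - 1) * hinv +
      (((p : ℝ) * q' - q * p' - p * q' * Real.sqrt 2 - q * p' * Real.sqrt 2
        - q * q' * Real.sqrt 2 ^ 2 + 1 - 2 * q * q') : ℝ) * hs2R

/-- ξ ∈ D[√2] is †-decomposable iff √2·ξ is †-decomposable. -/
theorem decomposable_iff_sqrt2_mul (ξ : ℝ)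
    (hξ : ∃ a b : ℤ, ∃ k : ℕ, ξ = ((a : ℝ) + b * Real.sqrt 2) / 2 ^ k) :
    (∃ t : ℂ, inDω t ∧ ∃ u : ℝ, unitZsqrt2 u ∧
        (starRingEnd ℂ) t * t = ((u * ξ : ℝ) : ℂ)) ↔
    (∃ s : ℂ, inDω s ∧ ∃ u : ℝ, unitZsqrt2 u ∧
        (starRingEnd ℂ) s * s = ((u * (Real.sqrt 2 * ξ) : ℝ) : ℂ)) := by
  constructor
  · rintro ⟨t, ⟨k, a, b, c, d, ht⟩, u, hu, heq⟩
    refine ⟨(1 + ω) * t, ⟨k, a + b, b + c, c + d, d - a, ?_⟩,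
      (1 + Real.sqrt 2) * u, unit_lam_mul hu, ?_⟩
    · rw [show (Real.sqrt 2 : ℂ) ^ k * ((1 + ω) * t)
          = (1 + ω) * ((Real.sqrt 2 : ℂ) ^ k * t) by ring, ht, mulδ]
    · rw [map_mul, show (starRingEnd ℂ) (1 + ω) * (starRingEnd ℂ) t * ((1 + ω) * t)
          = ((starRingEnd ℂ) (1 + ω) * (1 + ω)) * ((starRingEnd ℂ) t * t) by ring,
        hdelta, heq]
      push_cast
      linear_combination (-(u : ℂ)) * (ξ : ℂ) * hS2
  · rintro ⟨s, ⟨k, a, b, c, d, hs⟩, u, hu, heq⟩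
    refine ⟨((ω - ω ^ 2) / (Real.sqrt 2 : ℂ)) * s,
      ⟨k + 1, b - c, c - d, a + d, b - a, ?_⟩,
      (Real.sqrt 2 - 1) * u, unit_laminv_mul hu, ?_⟩
    · rw [show (Real.sqrt 2 : ℂ) ^ (k + 1) * (((ω - ω ^ 2) / (Real.sqrt 2 : ℂ)) * s)
          = (ω - ω ^ 2) * ((Real.sqrt 2 : ℂ) ^ k * s) by
            field_simp; ring, hs, mulτ]
    · rw [map_mul, show (starRingEnd ℂ) ((ω - ω ^ 2) / (Real.sqrt 2 : ℂ)) *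
          (starRingEnd ℂ) s * (((ω - ω ^ 2) / (Real.sqrt 2 : ℂ)) * s)
          = ((starRingEnd ℂ) ((ω - ω ^ 2) / (Real.sqrt 2 : ℂ)) *
            ((ω - ω ^ 2) / (Real.sqrt 2 : ℂ))) * ((starRingEnd ℂ) s * s) by ring,
        htau, heq]
      push_cast
      field_simp
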